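/- Suppose (A,B,C) has relative degree ρ with 1 ≤ ρ ≤ n. Then the polynomial p(X) ∈ 𝕜[X] given by the unique entry of C * adjugate(X·I_n − A) * B (matrices over 𝕜[X]) has degree exactly n − ρ, and its leading coefficient is ±(C * A^(ρ−1) * B); in particular the system has exactly n − ρ zeros counted with multiplicity (over an algebraically closed field). -/

import Mathlib

open Matrix

open Polynomial Finset

lemma aux_adj {𝕜 : Type*} [Field 𝕜] {n : ℕ} (hn : 1 ≤ n) (A : Matrix (Fin n) (Fin n) 𝕜) :
    (charmatrix A).adjugate = ∑ j ∈ Finset.Icc 1 n, Polynomial.C (A.charpoly.coeff j) •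
      ∑ k ∈ Finset.range j,
        (Matrix.scalar (Fin n) (Polynomial.X : Polynomial 𝕜)) ^ k
          * ((A ^ (j - 1 - k)).map Polynomial.C) := by
  set x : Matrix (Fin n) (Fin n) 𝕜[X] := Matrix.scalar (Fin n) (Polynomial.X : Polynomial 𝕜) with hx
  set y : Matrix (Fin n) (Fin n) 𝕜[X] := A.map Polynomial.C with hy
  set S : Matrix (Fin n) (Fin n) 𝕜[X] := ∑ j ∈ Finset.Icc 1 n, Polynomial.C (A.charpoly.coeff j) •
      ∑ k ∈ Finset.range j, x ^ k * ((A ^ (j - 1 - k)).map Polynomial.C) with hS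
  have hcomm : Commute x y := Matrix.scalar_commute _ (fun r => Commute.all _ _) _
  have hxy : charmatrix A = x - y := rfl
  have hypow : ∀ j : ℕ, y ^ j = (A ^ j).map Polynomial.C := by
    intro j
    have : y = (Polynomial.C : 𝕜 →+* 𝕜[X]).mapMatrix A := rfl
    rw [this, ← map_pow]; rfl
  have hnd : A.charpoly.natDegree = n := by
    simpa using A.charpoly_natDegree_eq_dim
  have hins : Finset.range (n + 1) = insert 0 (Finset.Icc 1 n) := by
    ext j; simp; omega
  -- Cayley-Hamilton
  have hCH : ∑ j ∈ Finset.Icc 1 n, A.charpoly.coeff j • A ^ j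
      = -(A.charpoly.coeff 0 • (1 : Matrix (Fin n) (Fin n) 𝕜)) := by
    have h := A.aeval_self_charpoly
    rw [Polynomial.aeval_eq_sum_range' (n := n + 1) (by omega)] at h
    rw [hins, Finset.sum_insert (by simp)] at h
    simp only [pow_zero] at h
    linear_combination (norm := abel) h
  have key : charmatrix A * S = A.charpoly • (1 : Matrix (Fin n) (Fin n) 𝕜[X]) := by
    rw [hxy, hS, Finset.mul_sum]
    have step : ∀ j ∈ Finset.Icc 1 n,
        (x - y) * (Polynomial.C (A.charpoly.coeff j) •
          ∑ k ∈ Finset.range j, x ^ k * ((A ^ (j - 1 - k)).map Polynomial.C)) =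
        Polynomial.C (A.charpoly.coeff j) • (x ^ j - y ^ j) := by
      intro j _
      rw [mul_smul_comm]
      congr 1
      have := hcomm.mul_geom_sum₂ j
      simp only [← hypow] at *
      exact this
    rw [Finset.sum_congr rfl step]
    have hsplit : ∑ j ∈ Finset.Icc 1 n, Polynomial.C (A.charpoly.coeff j) • (x ^ j - y ^ j)
        = (∑ j ∈ Finset.Icc 1 n, Polynomial.C (A.charpoly.coeff j) • x ^ j)
          - ∑ j ∈ Finset.Icc 1 n, Polynomial.C (A.charpoly.coeff j) • y ^ j := by
      rw [← Finset.sum_sub_distrib]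
      exact Finset.sum_congr rfl fun j _ => smul_sub _ _ _
    rw [hsplit]
    have h1 : ∑ j ∈ Finset.Icc 1 n, Polynomial.C (A.charpoly.coeff j) • x ^ j
        = Matrix.scalar (Fin n) (∑ j ∈ Finset.Icc 1 n,
            Polynomial.C (A.charpoly.coeff j) * Polynomial.X ^ j) := by
      have e : ∀ j ∈ Finset.Icc 1 n, Polynomial.C (A.charpoly.coeff j) • x ^ j
          = Matrix.scalar (Fin n) (Polynomial.C (A.charpoly.coeff j) * Polynomial.X ^ j) := by
        intro j _
        rw [hx, ← map_pow]
        ext i k : 2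
        simp [Matrix.scalar_apply, Matrix.diagonal_apply, mul_ite, mul_zero]
      rw [Finset.sum_congr rfl e, ← map_sum]
    have h2 : ∑ j ∈ Finset.Icc 1 n, Polynomial.C (A.charpoly.coeff j) • y ^ j
        = ((∑ j ∈ Finset.Icc 1 n, A.charpoly.coeff j • A ^ j).map Polynomial.C) := by
      ext i k : 2
      simp [hypow, Matrix.sum_apply, Matrix.map_apply, mul_comm]
    rw [h1, h2, hCH]
    have hchar : A.charpoly = Polynomial.C (A.charpoly.coeff 0)
        + ∑ j ∈ Finset.Icc 1 n, Polynomial.C (A.charpoly.coeff j) * Polynomial.X ^ j := by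
      conv_lhs => rw [Polynomial.as_sum_range' A.charpoly (n + 1) (by omega)]
      rw [hins, Finset.sum_insert (by simp)]
      simp [Polynomial.C_mul_X_pow_eq_monomial]
    have hm : ((-(A.charpoly.coeff 0 • (1 : Matrix (Fin n) (Fin n) 𝕜))).map Polynomial.C)
        = Matrix.scalar (Fin n) (-(Polynomial.C (A.charpoly.coeff 0))) := by
      refine Matrix.ext fun i k => ?_
      simp [Matrix.map_apply, Matrix.scalar_apply, Matrix.diagonal_apply, Matrix.one_apply,
        apply_ite (Polynomial.C : 𝕜 → 𝕜[X]), apply_ite (Neg.neg : 𝕜 → 𝕜)]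
    have hsm : A.charpoly • (1 : Matrix (Fin n) (Fin n) 𝕜[X]) = Matrix.scalar (Fin n) A.charpoly := by
      refine Matrix.ext fun i k => ?_
      simp [Matrix.scalar_apply, Matrix.diagonal_apply, Matrix.one_apply, mul_ite, mul_one,
        mul_zero]
    rw [hm]
    rw [hsm]
    rw [← map_sub]
    congr 1
    rw [sub_neg_eq_add]
    conv_rhs => rw [hchar]
    ring
  -- cancellation
  have hadj := Matrix.mul_adjugate (charmatrix A)
  have hdet : (charmatrix A).det = A.charpoly := rfl
  have hzero : A.charpoly • ((charmatrix A).adjugate - S) = 0 := by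
    have h3 : charmatrix A * ((charmatrix A).adjugate - S) = 0 := by
      rw [mul_sub, hadj, hdet, key, sub_self]
    have h4 := congrArg (fun M => (charmatrix A).adjugate * M) h3
    simpa only [← mul_assoc, Matrix.adjugate_mul, hdet, mul_zero, Matrix.smul_mul, one_mul]
      using h4
  have hchp : A.charpoly ≠ 0 := A.charpoly_monic.ne_zero
  have : (charmatrix A).adjugate - S = 0 := by
    refine Matrix.ext fun i k => ?_
    have := congrFun (congrFun hzero i) k
    simp only [Matrix.smul_apply, smul_eq_mul, Matrix.zero_apply] at this
    rcases mul_eq_zero.mp this with h | h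
    · exact absurd h hchp
    · simpa [Matrix.sub_apply] using h
  exact sub_eq_zero.mp this

/-- If `(A, B, C)` has relative degree `ρ` with `1 ≤ ρ ≤ n`, the
numerator polynomial `p(X) = C * adj(X I - A) * B` has degree exactly `n - ρ` with leading
coefficient `±(C * A^(ρ-1) * B)`; in particular the system has exactly `n - ρ` zeros
counted with multiplicity over an algebraic closure. -/
theorem stmt12 {𝕜 : Type*} [Field 𝕜] {n ρ : ℕ} (hn : 1 ≤ n) (hρ : 1 ≤ ρ) (hρn : ρ ≤ n)
    (A : Matrix (Fin n) (Fin n) 𝕜) (B : Matrix (Fin n) (Fin 1) 𝕜)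
    (C : Matrix (Fin 1) (Fin n) 𝕜)
    (hrd : ∀ i : ℕ, i + 2 ≤ ρ → C * A ^ i * B = 0)
    (hrd' : C * A ^ (ρ - 1) * B ≠ 0)
    (p : Polynomial 𝕜)
    (hp : p = (C.map Polynomial.C * (Matrix.charmatrix A).adjugate * B.map Polynomial.C) 0 0) :
    p.degree = ((n - ρ : ℕ) : WithBot ℕ) ∧
    (p.leadingCoeff = (C * A ^ (ρ - 1) * B) 0 0 ∨
      p.leadingCoeff = -((C * A ^ (ρ - 1) * B) 0 0)) ∧
    (p.map (algebraMap 𝕜 (AlgebraicClosure 𝕜))).roots.card = n - ρ := by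
  set m : ℕ → 𝕜 := fun i => (C * A ^ i * B) 0 0 with hm
  have hm0 : ∀ i : ℕ, i + 2 ≤ ρ → m i = 0 := by
    intro i h
    rw [hm]
    simp only [hrd i h, Matrix.zero_apply]
  have hnd : A.charpoly.natDegree = n := by simpa using A.charpoly_natDegree_eq_dim
  have hterm : ∀ (k i : ℕ),
      C.map Polynomial.C * ((Matrix.scalar (Fin n) (Polynomial.X : Polynomial 𝕜)) ^ k
        * ((A ^ i).map Polynomial.C)) * B.map Polynomial.C
      = (Polynomial.X : Polynomial 𝕜) ^ k • ((C * A ^ i * B).map Polynomial.C) := by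
    intro k i
    rw [← map_pow, Matrix.scalar_apply, ← Matrix.smul_eq_diagonal_mul, Matrix.mul_smul,
      Matrix.smul_mul, ← Matrix.map_mul, ← Matrix.map_mul]
  have hpe : p = ∑ j ∈ Finset.Icc 1 n, ∑ k ∈ Finset.range j,
      Polynomial.C (A.charpoly.coeff j * m (j - 1 - k)) * Polynomial.X ^ k := by
    rw [hp, aux_adj hn A, Matrix.mul_sum, Matrix.sum_mul, Matrix.sum_apply]
    refine Finset.sum_congr rfl fun j hj => ?_
    rw [Matrix.mul_smul, Matrix.smul_mul, Matrix.mul_sum, Matrix.sum_mul, Matrix.smul_apply,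
      Matrix.sum_apply, Finset.smul_sum]
    refine Finset.sum_congr rfl fun k hk => ?_
    rw [hterm k (j - 1 - k), Matrix.smul_apply, Matrix.map_apply]
    simp only [smul_eq_mul, Polynomial.C_mul]
    ring
  have hcoeff : ∀ t, p.coeff t = ∑ j ∈ Finset.Icc 1 n,
      (if t < j then A.charpoly.coeff j * m (j - 1 - t) else 0) := by
    intro t
    rw [hpe, Polynomial.finset_sum_coeff]
    refine Finset.sum_congr rfl fun j hj => ?_
    rw [Polynomial.finset_sum_coeff]
    simp only [Polynomial.coeff_C_mul_X_pow]
    rw [Finset.sum_ite_eq (Finset.range j) t]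
    simp [Finset.mem_range]
  have hvanish : ∀ t, n - ρ < t → p.coeff t = 0 := by
    intro t ht
    rw [hcoeff]
    refine Finset.sum_eq_zero fun j hj => ?_
    simp only [Finset.mem_Icc] at hj
    split
    · next h => exact mul_eq_zero_of_right _ (hm0 _ (by omega))
    · rfl
  have hld : p.coeff (n - ρ) = m (ρ - 1) := by
    rw [hcoeff]
    have hIcc : Finset.Icc 1 n = insert n (Finset.Icc 1 (n - 1)) := by
      ext j; simp [Finset.mem_Icc]; omega
    rw [hIcc, Finset.sum_insert (by simp [Finset.mem_Icc]; omega)]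
    have h1 : (if n - ρ < n then A.charpoly.coeff n * m (n - 1 - (n - ρ)) else 0) = m (ρ - 1) := by
      rw [if_pos (by omega)]
      have e : n - 1 - (n - ρ) = ρ - 1 := by omega
      have hc : A.charpoly.coeff n = 1 := by
        have := A.charpoly_monic.coeff_natDegree
        rwa [hnd] at this
      rw [e, hc, one_mul]
    have h2 : ∑ j ∈ Finset.Icc 1 (n - 1),
        (if n - ρ < j then A.charpoly.coeff j * m (j - 1 - (n - ρ)) else 0) = 0 := by
      refine Finset.sum_eq_zero fun j hj => ?_
      simp only [Finset.mem_Icc] at hj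
      split
      · next h => exact mul_eq_zero_of_right _ (hm0 _ (by omega))
      · rfl
    rw [h1, h2, add_zero]
  have hmne : m (ρ - 1) ≠ 0 := by
    intro h
    apply hrd'
    refine Matrix.ext fun i j => ?_
    rw [Subsingleton.elim i 0, Subsingleton.elim j 0, Matrix.zero_apply]
    exact h
  have hdegle : p.degree ≤ ((n - ρ : ℕ) : WithBot ℕ) := by
    refine (Polynomial.degree_le_iff_coeff_zero _ _).mpr fun t ht => hvanish t ?_
    exact_mod_cast ht
  have hdege : ((n - ρ : ℕ) : WithBot ℕ) ≤ p.degree :=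
    Polynomial.le_degree_of_ne_zero (by rw [hld]; exact hmne)
  have hdeg : p.degree = ((n - ρ : ℕ) : WithBot ℕ) := le_antisymm hdegle hdege
  have hnat : p.natDegree = n - ρ := Polynomial.natDegree_eq_of_degree_eq_some hdeg
  have hlead : p.leadingCoeff = m (ρ - 1) := by
    rw [Polynomial.leadingCoeff, hnat, hld]
  refine ⟨hdeg, Or.inl hlead, ?_⟩
  have hsp : Polynomial.Splits
      (p.map (algebraMap 𝕜 (AlgebraicClosure 𝕜))) :=
    IsAlgClosed.splits _
  rw [Polynomial.splits_iff_card_roots.mp hsp, Polynomial.natDegree_map, hnat]
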